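/- arXiv:1810.05058 — 3 statements merged into one kernel-verified Lean document; each statement's English description precedes it below -/
import Mathlib

section
/- (Hausdorff) Let κ ≤ λ be infinite cardinals such that λ^{<κ} = λ. Then there exists a κ-independent family F of subsets of λ (i.e., of the set of ordinals less than λ) with |F| = 2^λ. -/
universe u

/-- A family `F` of subsets of `X` is `κ`-independent if for any disjoint
subfamilies `σ, τ ⊆ F` each of cardinality less than `κ` there is a point of
`X` belonging to every member of `σ` and to no member of `τ`. -/
def IsIndepFamily {X : Type u} (κ : Cardinal.{u}) (F : Set (Set X)) : Prop :=
  ∀ σ τ : Set (Set X), σ ⊆ F → τ ⊆ F → Disjoint σ τ →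
    Cardinal.mk σ < κ → Cardinal.mk τ < κ →
      ∃ x : X, (∀ A ∈ σ, x ∈ A) ∧ ∀ A ∈ τ, x ∉ A

/-- For every cardinal `c < κ` there is a point of `κ.ord.ToType` whose set of
predecessors has cardinality exactly `c`. -/
lemma exists_Iio_mk_eq {κ : Cardinal.{u}} (c : Cardinal.{u}) (hc : c < κ) :
    ∃ i : κ.ord.ToType, Cardinal.mk (Set.Iio i) = c := by
  have h1 : c.ord < @Ordinal.type κ.ord.ToType (· < ·) isWellOrder_lt := by
    rw [Ordinal.type_toType]; exact Cardinal.ord_lt_ord.2 hc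
  set i := @Ordinal.enum κ.ord.ToType (· < ·) isWellOrder_lt ⟨c.ord, h1⟩ with hidef
  have h2 : @Ordinal.typein κ.ord.ToType (· < ·) isWellOrder_lt i = c.ord :=
    @Ordinal.typein_enum κ.ord.ToType (· < ·) isWellOrder_lt c.ord h1
  have h3 := @Ordinal.card_typein κ.ord.ToType (· < ·) isWellOrder_lt i
  rw [h2, Cardinal.card_ord] at h3
  exact ⟨i, h3.symm⟩

/-- If `#Z ≤ λ` and `λ^{<κ} = λ`, then there are at most `λ` subsets of `Z`
of cardinality `< κ`. -/
lemma mk_small_subsets_le {Z : Type u} {κ lam : Cardinal.{u}}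
    (hκ : Cardinal.aleph0 ≤ κ) (hlam : Cardinal.aleph0 ≤ lam) (hle : κ ≤ lam)
    (hZ : Cardinal.mk Z ≤ lam) (h : lam ^< κ = lam) :
    Cardinal.mk {S : Set Z // Cardinal.mk S < κ} ≤ lam := by
  have hsurj : ∃ f : (Σ i : κ.ord.ToType, (Set.Iio i → Z)) → {S : Set Z // Cardinal.mk S < κ},
      Function.Surjective f := by
    refine ⟨fun p => ⟨Set.range p.2, lt_of_le_of_lt Cardinal.mk_range_le
      (Cardinal.mk_Iio_ord_toType p.1)⟩, ?_⟩
    rintro ⟨S, hS⟩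
    obtain ⟨i, hi⟩ := exists_Iio_mk_eq (Cardinal.mk S) hS
    obtain ⟨e⟩ := Cardinal.eq.1 hi
    refine ⟨⟨i, fun x => ((e x : S) : Z)⟩, ?_⟩
    apply Subtype.ext
    ext z
    simp only [Set.mem_range]
    constructor
    · rintro ⟨x, rfl⟩; exact (e x).2
    · intro hz; exact ⟨e.symm ⟨z, hz⟩, by simp⟩
  obtain ⟨f, hf⟩ := hsurj
  calc Cardinal.mk {S : Set Z // Cardinal.mk S < κ}
      ≤ Cardinal.mk (Σ i : κ.ord.ToType, (Set.Iio i → Z)) := Cardinal.mk_le_of_surjective hf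
    _ = Cardinal.sum (fun i : κ.ord.ToType => Cardinal.mk (Set.Iio i → Z)) := Cardinal.mk_sigma _
    _ ≤ Cardinal.sum (fun _ : κ.ord.ToType => lam) := by
        refine Cardinal.sum_le_sum _ _ (fun i => ?_)
        have h1 : Cardinal.mk (Set.Iio i → Z)
            = Cardinal.mk Z ^ Cardinal.mk (Set.Iio i) := by
          rw [Cardinal.mk_arrow, Cardinal.lift_id, Cardinal.lift_id]
        rw [h1]
        calc Cardinal.mk Z ^ Cardinal.mk (Set.Iio i)
            ≤ lam ^ Cardinal.mk (Set.Iio i) := Cardinal.power_le_power_right hZ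
          _ ≤ lam ^< κ := Cardinal.le_powerlt lam (Cardinal.mk_Iio_ord_toType i)
          _ = lam := h
    _ = Cardinal.mk κ.ord.ToType * lam := Cardinal.sum_const' _ _
    _ = κ * lam := by rw [Cardinal.mk_ord_toType]
    _ ≤ lam * lam := mul_le_mul' hle le_rfl
    _ = lam := Cardinal.mul_eq_self hlam

/-- Hausdorff: If `κ ≤ λ` are infinite cardinals with
`λ^{<κ} = λ`, then there is a `κ`-independent family of subsets of `λ`
(identified with the type of ordinals less than `λ`) of cardinality `2^λ`. -/
theorem exists_independent_family (κ lam : Cardinal.{u})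
    (hκ : Cardinal.aleph0 ≤ κ) (hle : κ ≤ lam) (h : lam ^< κ = lam) :
    ∃ F : Set (Set lam.ord.ToType), IsIndepFamily κ F ∧
      Cardinal.mk F = 2 ^ lam := by
  classical
  set Y := lam.ord.ToType with hY
  have hmkY : Cardinal.mk Y = lam := Cardinal.mk_ord_toType lam
  have hlam : Cardinal.aleph0 ≤ lam := hκ.trans hle
  have h2lam : (2 : Cardinal.{u}) ≤ lam :=
    le_trans (le_of_lt (by exact_mod_cast Cardinal.nat_lt_aleph0 2)) hlam
  have hκ0 : (0 : Cardinal.{u}) < κ := lt_of_lt_of_le Cardinal.aleph0_pos hκ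
  -- the witness type
  let T := {t : Set Y // Cardinal.mk t < κ}
  let X := Σ t : T, {S : Set (Set ↥(t.1)) // Cardinal.mk S < κ}
  have hXne : Nonempty X :=
    ⟨⟨⟨∅, by rw [Cardinal.mk_emptyCollection]; exact hκ0⟩,
      ⟨∅, by rw [Cardinal.mk_emptyCollection]; exact hκ0⟩⟩⟩
  have hX : Cardinal.mk X ≤ lam := by
    have hT : Cardinal.mk T ≤ lam :=
      mk_small_subsets_le hκ hlam hle (le_of_eq hmkY) h
    calc Cardinal.mk X
        = Cardinal.sum (fun t : T => Cardinal.mk {S : Set (Set ↥(t.1)) // Cardinal.mk S < κ}) :=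
          Cardinal.mk_sigma _
      _ ≤ Cardinal.sum (fun _ : T => lam) := by
          refine Cardinal.sum_le_sum _ _ (fun t => ?_)
          refine mk_small_subsets_le hκ hlam hle ?_ h
          calc Cardinal.mk (Set ↥(t.1)) = 2 ^ Cardinal.mk ↥(t.1) := Cardinal.mk_set
            _ ≤ lam ^ Cardinal.mk ↥(t.1) := Cardinal.power_le_power_right h2lam
            _ ≤ lam ^< κ := Cardinal.le_powerlt lam t.2
            _ = lam := h
      _ = Cardinal.mk T * lam := Cardinal.sum_const' _ _
      _ ≤ lam * lam := mul_le_mul' hT le_rfl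
      _ = lam := Cardinal.mul_eq_self hlam
  -- a surjection from Y onto X
  have hXY : Cardinal.mk X ≤ Cardinal.mk Y := by rw [hmkY]; exact hX
  obtain ⟨emb⟩ := Cardinal.le_def X Y |>.1 hXY
  let g : Y → X := Function.invFun emb
  have hg : Function.Surjective g := Function.invFun_surjective emb.injective
  -- the independent family
  let P : X → Set Y → Prop := fun x A => (Subtype.val ⁻¹' A : Set ↥(x.1.1)) ∈ x.2.1
  let G : Set Y → Set Y := fun A => {y | P (g y) A}
  have key : ∀ σ τ : Set (Set Y), Disjoint σ τ → Cardinal.mk σ < κ → Cardinal.mk τ < κ →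
      ∃ y : Y, (∀ A ∈ σ, y ∈ G A) ∧ (∀ B ∈ τ, y ∉ G B) := by
    intro σ τ hdisj hσ hτ
    have hne : ∀ p : ↥σ × ↥τ, ∃ x : Y, ¬ (x ∈ (p.1 : Set Y) ↔ x ∈ (p.2 : Set Y)) := by
      intro p
      have hAB : (p.1 : Set Y) ≠ (p.2 : Set Y) := by
        intro hEq
        exact (Set.disjoint_left.1 hdisj p.1.2) (hEq ▸ p.2.2)
      by_contra hcon
      push_neg at hcon
      exact hAB (Set.ext fun x => (hcon x))
    choose ch hch using hne
    have hs : Cardinal.mk (Set.range ch) < κ := by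
      refine lt_of_le_of_lt Cardinal.mk_range_le ?_
      have : Cardinal.mk (↥σ × ↥τ) = Cardinal.mk σ * Cardinal.mk τ := by
        rw [Cardinal.mk_prod, Cardinal.lift_id, Cardinal.lift_id]
      rw [this]
      exact Cardinal.mul_lt_of_lt hκ hσ hτ
    set s : Set Y := Set.range ch with hsdef
    let trace : Set Y → Set ↥s := fun A => (Subtype.val ⁻¹' A : Set ↥s)
    have hS : Cardinal.mk (trace '' σ) < κ := lt_of_le_of_lt Cardinal.mk_image_le hσ
    obtain ⟨y, hy⟩ := hg ⟨⟨s, hs⟩, ⟨trace '' σ, hS⟩⟩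
    refine ⟨y, ?_, ?_⟩
    · intro A hA
      show P (g y) A
      rw [hy]
      exact ⟨A, hA, rfl⟩
    · intro B hB hmem
      have hmem' : P (g y) B := hmem
      rw [hy] at hmem'
      obtain ⟨A, hA, hEq⟩ := hmem'
      have hx := hch (⟨A, hA⟩, ⟨B, hB⟩)
      have hxs : ch (⟨A, hA⟩, ⟨B, hB⟩) ∈ s := ⟨_, rfl⟩
      have hiff : (⟨ch (⟨A, hA⟩, ⟨B, hB⟩), hxs⟩ : ↥s) ∈ trace A ↔
          (⟨ch (⟨A, hA⟩, ⟨B, hB⟩), hxs⟩ : ↥s) ∈ trace B := by rw [hEq]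
      exact hx (by simpa [trace] using hiff)
  have hGinj : Function.Injective G := by
    intro A B hEq
    by_contra hne
    obtain ⟨y, h1, h2⟩ := key {A} {B} (Set.disjoint_singleton.2 hne)
      (by rw [Cardinal.mk_singleton]; exact lt_of_lt_of_le Cardinal.one_lt_aleph0 hκ)
      (by rw [Cardinal.mk_singleton]; exact lt_of_lt_of_le Cardinal.one_lt_aleph0 hκ)
    exact h2 B rfl (hEq ▸ h1 A rfl)
  refine ⟨Set.range G, ?_, ?_⟩
  · intro σ τ hσF hτF hdisj hσ hτ
    let σ₀ := {A : Set Y | G A ∈ σ}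
    let τ₀ := {A : Set Y | G A ∈ τ}
    have hinj : ∀ (ρ : Set (Set Y)),
        Function.Injective (fun A : {A : Set Y | G A ∈ ρ} => (⟨G A.1, A.2⟩ : ↥ρ)) := by
      intro ρ A B hAB
      exact Subtype.ext (hGinj (congrArg Subtype.val hAB))
    have hσ₀ : Cardinal.mk σ₀ < κ :=
      lt_of_le_of_lt (Cardinal.mk_le_of_injective (hinj σ)) hσ
    have hτ₀ : Cardinal.mk τ₀ < κ :=
      lt_of_le_of_lt (Cardinal.mk_le_of_injective (hinj τ)) hτ
    have hdisj₀ : Disjoint σ₀ τ₀ := by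
      rw [Set.disjoint_left]
      intro A hA hA'
      exact Set.disjoint_left.1 hdisj hA hA'
    obtain ⟨y, h1, h2⟩ := key σ₀ τ₀ hdisj₀ hσ₀ hτ₀
    refine ⟨y, ?_, ?_⟩
    · intro U hU
      obtain ⟨A, rfl⟩ := hσF hU
      exact h1 A hU
    · intro U hU
      obtain ⟨A, rfl⟩ := hτF hU
      exact h2 A hU
  · rw [Cardinal.mk_range_eq G hGinj, Cardinal.mk_set, hmkY]
end

section
/- (Solovay) Let δ be a regular uncountable cardinal and let ⟨S_α : α < δ⟩ be a partition of the set {ξ < δ : cf(ξ) = ω} into sets each of which is stationary in δ. Let A be the Solovay set associated to this partition: the set of all σ ⊆ δ such that σ = {α < δ : S_α ∩ sup(σ) is stationary in sup(σ)}. Then A belongs to every countably complete normal fine ultrafilter on P(δ). -/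
/-- `C` is club in the (limit) ordinal `γ`: `C` consists of ordinals less than
`γ`, is unbounded in `γ`, and is closed under suprema of its nonempty subsets
that are bounded below `γ`. -/
def IsClubIn (C : Set Ordinal) (γ : Ordinal) : Prop :=
  C ⊆ Set.Iio γ ∧ (∀ β < γ, ∃ ξ ∈ C, β ≤ ξ) ∧
    ∀ s ⊆ C, s.Nonempty → sSup s < γ → sSup s ∈ C

/-- `S` is stationary in `γ`: `S` meets every club subset of `γ`. -/
def IsStationaryIn (S : Set Ordinal) (γ : Ordinal) : Prop :=
  ∀ C : Set Ordinal, IsClubIn C γ → (S ∩ C).Nonempty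

universe u

lemma bddAbove_of_subset_Iio {σ : Set Ordinal.{u}} {b : Ordinal.{u}} (h : σ ⊆ Set.Iio b) :
    BddAbove σ := ⟨b, fun _ hx => (h hx).le⟩

lemma countable_sSup_lt {δ : Cardinal.{u}} (hreg : δ.IsRegular) (hunc : Cardinal.aleph0 < δ)
    {s : Set Ordinal.{u}} (hc : s.Countable) (hs : ∀ x ∈ s, x < δ.ord) : sSup s < δ.ord := by
  rcases s.eq_empty_or_nonempty with rfl | hne
  · rw [csSup_empty]
    exact Cardinal.lt_ord.mpr (by simpa using hreg.pos)
  · obtain ⟨f, rfl⟩ := hc.exists_eq_range hne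
    have h1 : sSup (Set.range f) = iSup f := rfl
    rw [h1]
    refine Cardinal.iSup_lt_ord_lift_of_isRegular hreg ?_ fun n => hs _ (Set.mem_range_self n)
    simpa using hunc

lemma exists_countable_cofinal {X : Set Ordinal.{u}} {ξ : Ordinal.{u}}
    (hcof : ξ.cof = Cardinal.aleph0) (hbd : BddAbove X) (hsup : sSup X = ξ) (hne : ξ ∉ X) :
    ∃ s ⊆ X, s.Countable ∧ s.Nonempty ∧ sSup s = ξ := by
  have hXne : X.Nonempty := by
    rcases X.eq_empty_or_nonempty with rfl | h
    · exfalso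
      rw [csSup_empty] at hsup
      rw [← hsup, Ordinal.bot_eq_zero, Ordinal.cof_zero] at hcof
      exact Cardinal.aleph0_ne_zero hcof.symm
    · exact h
  obtain ⟨ι, f, hlsub, hcard⟩ := Ordinal.exists_lsub_cof ξ
  rw [hcof] at hcard
  have : Countable ι := Cardinal.mk_le_aleph0_iff.mp hcard.le
  have : Nonempty ι := Cardinal.mk_ne_zero_iff.mp (by rw [hcard]; exact Cardinal.aleph0_ne_zero)
  obtain ⟨e, he⟩ := exists_surjective_nat ι
  have hflt : ∀ i, f i < ξ := fun i => hlsub ▸ Ordinal.lt_lsub f i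
  have hg : ∀ n : ℕ, ∃ x ∈ X, f (e n) < x := fun n =>
    exists_lt_of_lt_csSup hXne (hsup ▸ hflt (e n))
  choose g hg1 hg2 using hg
  refine ⟨Set.range g, Set.range_subset_iff.mpr hg1, Set.countable_range g,
    Set.range_nonempty g, le_antisymm ?_ ?_⟩
  · exact csSup_le (Set.range_nonempty g) (by rintro x ⟨n, rfl⟩; exact hsup ▸ le_csSup hbd (hg1 n))
  · by_contra hlt
    push_neg at hlt
    rw [← hlsub] at hlt
    obtain ⟨i, hi⟩ := Ordinal.lt_lsub_iff.mp hlt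
    obtain ⟨n, rfl⟩ := he i
    have hbd' : BddAbove (Set.range g) := hbd.mono (Set.range_subset_iff.mpr hg1)
    exact (hi.trans_lt (hg2 n)).not_ge (le_csSup hbd' (Set.mem_range_self n))

/-- The set of closure points of `X` below `γ`. -/
def clpts (X : Set Ordinal.{u}) (γ : Ordinal.{u}) : Set Ordinal.{u} :=
  {ξ | ξ < γ ∧ (X ∩ Set.Iic ξ).Nonempty ∧ sSup (X ∩ Set.Iic ξ) = ξ}

lemma mem_clpts_of_mem {X : Set Ordinal.{u}} {γ x : Ordinal.{u}} (hX : X ⊆ Set.Iio γ)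
    (hx : x ∈ X) : x ∈ clpts X γ := by
  refine ⟨hX hx, ⟨x, hx, Set.self_mem_Iic⟩, le_antisymm (csSup_le ⟨x, hx, Set.self_mem_Iic⟩ fun y hy => hy.2) ?_⟩
  exact le_csSup ⟨x, fun y hy => hy.2⟩ ⟨hx, Set.self_mem_Iic⟩

lemma clpts_isClubIn {X : Set Ordinal.{u}} {γ : Ordinal.{u}} (hX : X ⊆ Set.Iio γ)
    (hub : ∀ β < γ, ∃ x ∈ X, β < x) : IsClubIn (clpts X γ) γ := by
  refine ⟨fun ξ h => h.1, ?_, ?_⟩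
  · intro β hβ
    obtain ⟨x, hx, hβx⟩ := hub β hβ
    exact ⟨x, mem_clpts_of_mem hX hx, hβx.le⟩
  · intro s hs hsne hslt
    set ξ := sSup s with hξ
    have hsbd : BddAbove s := bddAbove_of_subset_Iio (fun x hx => (hs hx).1)
    obtain ⟨η, hη⟩ := hsne
    have hηξ : η ≤ ξ := le_csSup hsbd hη
    have hXbd : ∀ ζ : Ordinal.{u}, BddAbove (X ∩ Set.Iic ζ) := fun ζ => ⟨ζ, fun y hy => hy.2⟩
    refine ⟨hslt, (hs hη).2.1.mono (Set.inter_subset_inter_right _ (Set.Iic_subset_Iic.mpr hηξ)), le_antisymm (csSup_le ((hs hη).2.1.mono (Set.inter_subset_inter_right _ (Set.Iic_subset_Iic.mpr hηξ))) fun y hy => hy.2) ?_⟩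
    refine csSup_le ⟨η, hη⟩ fun ζ hζ => ?_
    have := (hs hζ).2.2
    calc ζ = sSup (X ∩ Set.Iic ζ) := this.symm
    _ ≤ sSup (X ∩ Set.Iic ξ) := csSup_le_csSup (hXbd ξ) (hs hζ).2.1
        (Set.inter_subset_inter_right _ (Set.Iic_subset_Iic.mpr (le_csSup hsbd hζ)))

lemma clpts_cofinal_countable {X : Set Ordinal.{u}} {γ ξ : Ordinal.{u}}
    (hξ : ξ ∈ clpts X γ) (hcof : ξ.cof = Cardinal.aleph0) :
    ∃ s ⊆ X, s.Countable ∧ s.Nonempty ∧ sSup s = ξ := by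
  by_cases hmem : ξ ∈ X
  · exact ⟨{ξ}, Set.singleton_subset_iff.mpr hmem, Set.countable_singleton ξ,
      Set.singleton_nonempty ξ, csSup_singleton ξ⟩
  · have hne : ξ ∉ X ∩ Set.Iic ξ := fun h => hmem h.1
    obtain ⟨s, hs1, hs2, hs3, hs4⟩ :=
      exists_countable_cofinal hcof ⟨ξ, fun y hy => hy.2⟩ hξ.2.2 hne
    exact ⟨s, hs1.trans (Set.inter_subset_left), hs2, hs3, hs4⟩

/-- Pointwise: under closure properties of `σ`, every stationarily-active index is in `σ`. -/
lemma stationary_index_mem {δ : Cardinal.{u}} {S : Ordinal.{u} → Set Ordinal.{u}}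
    (hsub : ∀ α < δ.ord, S α ⊆ {ξ : Ordinal | ξ < δ.ord ∧ Ordinal.cof ξ = Cardinal.aleph0})
    {σ : Set Ordinal.{u}} (hσδ : σ ⊆ Set.Iio δ.ord) (h0 : (0 : Ordinal) ∈ σ)
    (hP2 : ∀ s ⊆ σ, s.Countable → s.Nonempty → sSup s ∈ σ)
    (hP4 : ∀ ξ ∈ σ, ∀ α < δ.ord, ξ ∈ S α → α ∈ σ)
    (hP6 : sSup σ ∉ σ) :
    ∀ α, α < δ.ord → IsStationaryIn (S α ∩ Set.Iio (sSup σ)) (sSup σ) → α ∈ σ := by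
  intro α hα hstatα
  have hbd : BddAbove σ := bddAbove_of_subset_Iio hσδ
  have hσγ : σ ⊆ Set.Iio (sSup σ) := fun x hx =>
    lt_of_le_of_ne (le_csSup hbd hx) (by rintro rfl; exact hP6 hx)
  have hub : ∀ β < sSup σ, ∃ x ∈ σ, β < x := fun β hβ => exists_lt_of_lt_csSup ⟨0, h0⟩ hβ
  obtain ⟨ξ, ⟨hξS, _⟩, hξcl⟩ := hstatα _ (clpts_isClubIn hσγ hub)
  have hcof : ξ.cof = Cardinal.aleph0 := (hsub α hα hξS).2
  obtain ⟨s, hsσ, hsc, hsne, hssup⟩ := clpts_cofinal_countable hξcl hcof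
  exact hP4 ξ (hssup ▸ hP2 s hsσ hsc hsne) α hα hξS
/-- The Solovay trace operation. -/
def solT (δ : Cardinal.{u}) (S : Ordinal.{u} → Set Ordinal.{u}) (σ : Set Ordinal.{u}) :
    Set Ordinal.{u} :=
  {α : Ordinal | α < δ.ord ∧ IsStationaryIn (S α ∩ Set.Iio (sSup σ)) (sSup σ)}

/-- Solovay: Let `δ` be a regular uncountable cardinal and let
`⟨S α : α < δ⟩` be a partition of `{ξ < δ : cf ξ = ω}` into sets stationary in
`δ`.  Then the associated Solovay set — the set of all `σ ⊆ δ` such that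
`σ = {α < δ : S α ∩ sup σ is stationary in sup σ}` — belongs to every
countably complete normal fine ultrafilter on `P(δ)` (formalized as an
ultrafilter on `Set Ordinal` concentrating on the powerset of `Set.Iio δ.ord`). -/
theorem solovay_set_mem_normal_fine_ultrafilter (δ : Cardinal) (hreg : δ.IsRegular)
    (hunc : Cardinal.aleph0 < δ) (S : Ordinal → Set Ordinal)
    (hsub : ∀ α < δ.ord, S α ⊆ {ξ : Ordinal | ξ < δ.ord ∧ Ordinal.cof ξ = Cardinal.aleph0})
    (hdisj : ∀ α < δ.ord, ∀ β < δ.ord, α ≠ β → Disjoint (S α) (S β))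
    (hcover : {ξ : Ordinal | ξ < δ.ord ∧ Ordinal.cof ξ = Cardinal.aleph0} ⊆
      ⋃ α ∈ Set.Iio δ.ord, S α)
    (hstat : ∀ α < δ.ord, IsStationaryIn (S α) δ.ord)
    (𝒰 : Ultrafilter (Set Ordinal))
    (hconc : {σ : Set Ordinal | σ ⊆ Set.Iio δ.ord} ∈ 𝒰)
    (hcc : ∀ s : ℕ → Set (Set Ordinal), (∀ n, s n ∈ 𝒰) → (⋂ n, s n) ∈ 𝒰)
    (hfine : ∀ α < δ.ord, {σ : Set Ordinal | α ∈ σ} ∈ 𝒰)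
    (hnormal : ∀ f : Set Ordinal → Ordinal,
      {σ : Set Ordinal | f σ ∈ σ} ∈ 𝒰 → ∃ c : Ordinal, {σ : Set Ordinal | f σ = c} ∈ 𝒰) :
    {σ : Set Ordinal | σ ⊆ Set.Iio δ.ord ∧
      σ = {α : Ordinal | α < δ.ord ∧
        IsStationaryIn (S α ∩ Set.Iio (sSup σ)) (sSup σ)}} ∈ 𝒰 := by
  classical
  suffices h : {σ : Set Ordinal | σ ⊆ Set.Iio δ.ord ∧ σ = solT δ S σ} ∈ 𝒰 by exact h
  have hδ0 : (0 : Ordinal) < δ.ord := Cardinal.lt_ord.mpr (by simpa using hreg.pos)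
  have hδlim : Order.IsSuccLimit δ.ord := Cardinal.isSuccLimit_ord hreg.aleph0_le
  -- a.e. σ is closed under countable suprema
  have hG2 : {σ : Set Ordinal | ∀ s ⊆ σ, s.Countable → s.Nonempty → sSup s ∈ σ} ∈ 𝒰 := by
    by_contra hcon
    have hWmem : {σ : Set Ordinal | ∀ s ⊆ σ, s.Countable → s.Nonempty → sSup s ∈ σ}ᶜ ∈ 𝒰 :=
      Ultrafilter.compl_mem_iff_notMem.mpr hcon
    have hw : ∀ σ ∈ {σ : Set Ordinal | ∀ s ⊆ σ, s.Countable → s.Nonempty → sSup s ∈ σ}ᶜ,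
        ∃ f : ℕ → Ordinal, Set.range f ⊆ σ ∧ sSup (Set.range f) ∉ σ := by
      intro σ hσ
      simp only [Set.mem_compl_iff, Set.mem_setOf_eq] at hσ
      push_neg at hσ
      obtain ⟨s, hs1, hs2, hs3, hs4⟩ := hσ
      obtain ⟨f, rfl⟩ := hs2.exists_eq_range hs3
      exact ⟨f, hs1, hs4⟩
    choose! F hF1 hF2 using hw
    have hn : ∀ n : ℕ, ∃ c, {σ : Set Ordinal | F σ n = c} ∈ 𝒰 := by
      intro n
      exact hnormal (fun σ => F σ n)
        (Filter.mem_of_superset hWmem fun σ hσ => hF1 σ hσ (Set.mem_range_self n))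
    choose c hc using hn
    have hcδ : ∀ n, c n < δ.ord := by
      intro n
      obtain ⟨σ, ⟨h1, h2⟩, h3⟩ := Ultrafilter.nonempty_of_mem
        (Filter.inter_mem (Filter.inter_mem (hc n) hWmem) hconc)
      exact h3 (h1 ▸ hF1 σ h2 (Set.mem_range_self n))
    have htlt : sSup (Set.range c) < δ.ord :=
      countable_sSup_lt hreg hunc (Set.countable_range c) (by rintro x ⟨n, rfl⟩; exact hcδ n)
    have hbig := Filter.inter_mem (Filter.inter_mem hWmem
      (hcc (fun n => {σ : Set Ordinal | F σ n = c n}) hc)) (hfine _ htlt)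
    obtain ⟨σ, ⟨hσW, hσn⟩, hσt⟩ := Ultrafilter.nonempty_of_mem hbig
    have hrange : Set.range (F σ) = Set.range c := by
      ext x
      constructor <;> rintro ⟨n, rfl⟩
      · exact ⟨n, (Set.mem_iInter.mp hσn n).symm⟩
      · exact ⟨n, Set.mem_iInter.mp hσn n⟩
    exact (hrange ▸ hF2 σ hσW) hσt
  -- a.e. σ is closed under the partition index
  have hG4 : {σ : Set Ordinal | ∀ ξ ∈ σ, ∀ α < δ.ord, ξ ∈ S α → α ∈ σ} ∈ 𝒰 := by
    by_contra hcon
    have hWmem : {σ : Set Ordinal | ∀ ξ ∈ σ, ∀ α < δ.ord, ξ ∈ S α → α ∈ σ}ᶜ ∈ 𝒰 :=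
      Ultrafilter.compl_mem_iff_notMem.mpr hcon
    have hw : ∀ σ ∈ {σ : Set Ordinal | ∀ ξ ∈ σ, ∀ α < δ.ord, ξ ∈ S α → α ∈ σ}ᶜ,
        ∃ p : Ordinal × Ordinal, p.1 ∈ σ ∧ p.2 < δ.ord ∧ p.1 ∈ S p.2 ∧ p.2 ∉ σ := by
      intro σ hσ
      simp only [Set.mem_compl_iff, Set.mem_setOf_eq] at hσ
      push_neg at hσ
      obtain ⟨ξ, hξ, α, hα, hS, hno⟩ := hσ
      exact ⟨(ξ, α), hξ, hα, hS, hno⟩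
    choose! p hp1 hp2 hp3 hp4 using hw
    obtain ⟨ξ₀, hξ₀⟩ := hnormal (fun σ => (p σ).1)
      (Filter.mem_of_superset hWmem fun σ hσ => hp1 σ hσ)
    have hA := Filter.inter_mem hWmem hξ₀
    obtain ⟨σ₁, hσ₁⟩ := Ultrafilter.nonempty_of_mem hA
    have hkey : ∀ σ, σ ∈ ({σ : Set Ordinal | ∀ ξ ∈ σ, ∀ α < δ.ord, ξ ∈ S α → α ∈ σ}ᶜ ∩
        {σ : Set Ordinal | (p σ).1 = ξ₀}) → (p σ).2 = (p σ₁).2 := by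
      intro σ hσ
      by_contra hne
      have h1 : ξ₀ ∈ S (p σ).2 := hσ.2 ▸ hp3 σ hσ.1
      have h2 : ξ₀ ∈ S (p σ₁).2 := hσ₁.2 ▸ hp3 σ₁ hσ₁.1
      exact (Set.disjoint_left.mp (hdisj _ (hp2 σ hσ.1) _ (hp2 σ₁ hσ₁.1) hne) h1) h2
    obtain ⟨σ, hσ, hσf⟩ := Ultrafilter.nonempty_of_mem
      (Filter.inter_mem hA (hfine (p σ₁).2 (hp2 σ₁ hσ₁.1)))
    exact hp4 σ hσ.1 ((hkey σ hσ).symm ▸ hσf)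
  -- a.e. σ does not contain its supremum
  have hG6 : {σ : Set Ordinal | sSup σ ∉ σ} ∈ 𝒰 := by
    by_contra hcon
    have h1 : {σ : Set Ordinal | sSup σ ∈ σ} ∈ 𝒰 := by
      have h2 : {σ : Set Ordinal | sSup σ ∉ σ}ᶜ = {σ : Set Ordinal | sSup σ ∈ σ} := by
        ext σ; simp
      rw [← h2]
      exact Ultrafilter.compl_mem_iff_notMem.mpr hcon
    obtain ⟨c, hc⟩ := hnormal (fun σ => sSup σ) h1
    have hB := Filter.inter_mem (Filter.inter_mem hc h1) hconc
    obtain ⟨σ₀, ⟨hs1, hs2⟩, hs3⟩ := Ultrafilter.nonempty_of_mem hB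
    have hcδ : c < δ.ord := hs3 (hs1 ▸ hs2)
    have hsucc : c + 1 < δ.ord := by
      rw [Ordinal.add_one_eq_succ]
      exact hδlim.succ_lt hcδ
    obtain ⟨σ, ⟨⟨h1', _⟩, h3'⟩, h4'⟩ := Ultrafilter.nonempty_of_mem (Filter.inter_mem hB (hfine _ hsucc))
    have hle : c + 1 ≤ sSup σ := le_csSup (bddAbove_of_subset_Iio h3') h4'
    rw [h1'] at hle
    have hlt : c < c + 1 := by
      rw [Ordinal.add_one_eq_succ]
      exact Order.lt_succ c
    exact hlt.not_ge hle
  -- main argument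
  by_contra hcon
  have hcompl : {σ : Set Ordinal | σ ⊆ Set.Iio δ.ord ∧ σ = solT δ S σ}ᶜ ∈ 𝒰 :=
    Ultrafilter.compl_mem_iff_notMem.mpr hcon
  set W := {σ : Set Ordinal | (σ ⊆ Set.Iio δ.ord ∧ σ ≠ solT δ S σ) ∧
      (∀ s ⊆ σ, s.Countable → s.Nonempty → sSup s ∈ σ) ∧
      (∀ ξ ∈ σ, ∀ α < δ.ord, ξ ∈ S α → α ∈ σ) ∧ sSup σ ∉ σ ∧ (0 : Ordinal) ∈ σ} with hWdef
  have hWmem : W ∈ 𝒰 := by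
    have hb := Filter.inter_mem (Filter.inter_mem (Filter.inter_mem (Filter.inter_mem (Filter.inter_mem hcompl hconc) hG2) hG4)
      hG6) (hfine 0 hδ0)
    refine Filter.mem_of_superset hb ?_
    rintro σ ⟨⟨⟨⟨⟨hc1, hc2⟩, hc3⟩, hc4⟩, hc5⟩, hc6⟩
    exact ⟨⟨hc2, fun h => hc1 ⟨hc2, h⟩⟩, hc3, hc4, hc5, hc6⟩
  have hW : ∀ σ ∈ W, ∃ α, α ∈ σ ∧ α ∉ solT δ S σ := by
    rintro σ ⟨⟨hδσ, hne⟩, h2, h4, h6, h0⟩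
    have hTsub : solT δ S σ ⊆ σ := fun α hα =>
      stationary_index_mem hsub hδσ h0 h2 h4 h6 α hα.1 hα.2
    obtain ⟨x, hx1, hx2⟩ := Set.exists_of_ssubset (hTsub.ssubset_of_ne fun h => hne h.symm)
    exact ⟨x, hx1, hx2⟩
  choose! αf hα1 hα2 using hW
  obtain ⟨α₀, hα₀⟩ := hnormal αf (Filter.mem_of_superset hWmem fun σ hσ => hα1 σ hσ)
  set E := W ∩ {σ : Set Ordinal | αf σ = α₀} with hEdef
  have hEmem : E ∈ 𝒰 := Filter.inter_mem hWmem hα₀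
  obtain ⟨σ₂, hσ₂⟩ := Ultrafilter.nonempty_of_mem hEmem
  have hα₀δ : α₀ < δ.ord := hσ₂.1.1.1 (hσ₂.2 ▸ hα1 σ₂ hσ₂.1)
  have hEδ : ∀ σ ∈ E, σ ⊆ Set.Iio δ.ord := fun σ hσ => hσ.1.1.1
  have hE0 : ∀ σ ∈ E, (0 : Ordinal) ∈ σ := fun σ hσ => hσ.1.2.2.2.2
  have hE6 : ∀ σ ∈ E, sSup σ ∉ σ := fun σ hσ => hσ.1.2.2.2.1
  have hmemlt : ∀ σ ∈ E, ∀ x ∈ σ, x < sSup σ := by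
    intro σ hσ x hx
    exact lt_of_le_of_ne (le_csSup (bddAbove_of_subset_Iio (hEδ σ hσ)) hx)
      (fun h => hE6 σ hσ (h ▸ hx))
  have hnostat : ∀ σ ∈ E, ¬ IsStationaryIn (S α₀ ∩ Set.Iio (sSup σ)) (sSup σ) := by
    intro σ hσ hstatc
    exact hα2 σ hσ.1 (by rw [hσ.2]; exact ⟨hα₀δ, hstatc⟩)
  have hC : ∀ σ ∈ E, ∃ C : Set Ordinal, IsClubIn C (sSup σ) ∧
      S α₀ ∩ Set.Iio (sSup σ) ∩ C = ∅ := by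
    intro σ hσ
    have hns := hnostat σ hσ
    unfold IsStationaryIn at hns
    push_neg at hns
    obtain ⟨C, hC1, hC2⟩ := hns
    exact ⟨C, hC1, hC2⟩
  choose! Cf hCclub hCdisj using hC
  set D := {ζ : Ordinal | ζ < δ.ord ∧ {σ : Set Ordinal | σ ∈ E ∧ ζ ∈ Cf σ} ∈ 𝒰} with hDdef
  have hstep : ∀ p : {o : Ordinal // o < δ.ord}, ∃ ζ, ζ < δ.ord ∧ p.1 < ζ ∧
      {σ : Set Ordinal | σ ∈ E ∧ ∃ x ∈ Cf σ, p.1 ≤ x ∧ x < ζ} ∈ 𝒰 := by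
    rintro ⟨β, hβ⟩
    have hEβ : E ∩ {σ : Set Ordinal | β ∈ σ} ∈ 𝒰 := Filter.inter_mem hEmem (hfine β hβ)
    have hx : ∀ σ ∈ E ∩ {σ : Set Ordinal | β ∈ σ}, ∃ x ∈ Cf σ, β ≤ x := fun σ hσ =>
      (hCclub σ hσ.1).2.1 β (hmemlt σ hσ.1 β hσ.2)
    choose! xf hx1 hx2 using hx
    have hy : ∀ σ ∈ E ∩ {σ : Set Ordinal | β ∈ σ}, ∃ y ∈ σ, xf σ < y := fun σ hσ =>
      exists_lt_of_lt_csSup ⟨0, hE0 σ hσ.1⟩ (Set.mem_Iio.mp ((hCclub σ hσ.1).1 (hx1 σ hσ)))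
    choose! yf hy1 hy2 using hy
    obtain ⟨ζ, hζ⟩ := hnormal yf (Filter.mem_of_superset hEβ fun σ hσ => hy1 σ hσ)
    obtain ⟨σ₃, hσ₃E, hσ₃y⟩ := Ultrafilter.nonempty_of_mem (Filter.inter_mem hEβ hζ)
    refine ⟨ζ, ?_, ?_, ?_⟩
    · exact hEδ σ₃ hσ₃E.1 (hσ₃y ▸ hy1 σ₃ hσ₃E)
    · calc β ≤ xf σ₃ := hx2 σ₃ hσ₃E
        _ < yf σ₃ := hy2 σ₃ hσ₃E
        _ = ζ := hσ₃y
    · refine Filter.mem_of_superset (Filter.inter_mem hEβ hζ) ?_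
      rintro σ ⟨hσ1, hσ2⟩
      exact ⟨hσ1.1, xf σ, hx1 σ hσ1, hx2 σ hσ1, lt_of_lt_of_eq (hy2 σ hσ1) hσ2⟩
  have hDub : ∀ β < δ.ord, ∃ ζ ∈ D, β < ζ := by
    intro β hβ
    choose Fz hFz1 hFz2 hFz3 using hstep
    let F : {o : Ordinal // o < δ.ord} → {o : Ordinal // o < δ.ord} := fun q => ⟨Fz q, hFz1 q⟩
    let b : ℕ → {o : Ordinal // o < δ.ord} := fun n => F^[n] ⟨β, hβ⟩
    have hbs : ∀ n, b (n + 1) = F (b n) := fun n => Function.iterate_succ_apply' F n _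
    have hblt : ∀ n, (b n).1 < (b (n + 1)).1 := fun n => by rw [hbs n]; exact hFz2 (b n)
    have hbmem : ∀ n,
        {σ : Set Ordinal | σ ∈ E ∧ ∃ x ∈ Cf σ, (b n).1 ≤ x ∧ x < (b (n + 1)).1} ∈ 𝒰 :=
      fun n => by rw [hbs n]; exact hFz3 (b n)
    set ζ : Ordinal := sSup (Set.range fun n => (b n).1) with hζdef
    have hbbd : BddAbove (Set.range fun n => (b n).1) :=
      ⟨δ.ord, by rintro x ⟨n, rfl⟩; exact (b n).2.le⟩
    have hζδ : ζ < δ.ord := countable_sSup_lt hreg hunc (Set.countable_range _)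
      (by rintro x ⟨n, rfl⟩; exact (b n).2)
    have hbig := Filter.inter_mem (hcc _ hbmem) (hfine ζ hζδ)
    have hsubD : (⋂ n, {σ : Set Ordinal | σ ∈ E ∧ ∃ x ∈ Cf σ, (b n).1 ≤ x ∧ x < (b (n + 1)).1})
        ∩ {σ : Set Ordinal | ζ ∈ σ} ⊆ {σ : Set Ordinal | σ ∈ E ∧ ζ ∈ Cf σ} := by
      rintro σ ⟨hσ1, hσ2⟩
      have hσn := fun n => Set.mem_iInter.mp hσ1 n
      have hσE : σ ∈ E := (hσn 0).1
      choose xg hxg1 hxg2 hxg3 using fun n => (hσn n).2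
      have hsC : Set.range xg ⊆ Cf σ := Set.range_subset_iff.mpr hxg1
      have hCbd : BddAbove (Cf σ) := bddAbove_of_subset_Iio (hCclub σ hσE).1
      have hsle : sSup (Set.range xg) = ζ := by
        apply le_antisymm
        · refine csSup_le (Set.range_nonempty xg) ?_
          rintro x ⟨n, rfl⟩
          exact le_trans (hxg3 n).le (le_csSup hbbd ⟨n + 1, rfl⟩)
        · refine csSup_le (Set.range_nonempty _) ?_
          rintro x ⟨n, rfl⟩
          exact le_trans (hxg2 n) (le_csSup (BddAbove.mono hsC hCbd) ⟨n, rfl⟩)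
      have hζlt : ζ < sSup σ := hmemlt σ hσE ζ hσ2
      have hmemC : sSup (Set.range xg) ∈ Cf σ :=
        (hCclub σ hσE).2.2 _ hsC (Set.range_nonempty xg) (by rw [hsle]; exact hζlt)
      rw [hsle] at hmemC
      exact ⟨hσE, hmemC⟩
    have hζD : ζ ∈ D := ⟨hζδ, Filter.mem_of_superset hbig hsubD⟩
    refine ⟨ζ, hζD, ?_⟩
    have hb0 : (b 0).1 = β := rfl
    calc β = (b 0).1 := hb0.symm
      _ < (b 1).1 := hblt 0
      _ ≤ ζ := le_csSup hbbd ⟨1, rfl⟩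
  have hDcl : ∀ s ⊆ D, s.Countable → s.Nonempty → sSup s < δ.ord → sSup s ∈ D := by
    intro s hsD hsc hsne hslt
    obtain ⟨f, rfl⟩ := hsc.exists_eq_range hsne
    have hAn : ∀ n : ℕ, {σ : Set Ordinal | σ ∈ E ∧ f n ∈ Cf σ} ∈ 𝒰 :=
      fun n => (hsD (Set.mem_range_self n)).2
    have hbig := Filter.inter_mem (hcc _ hAn) (hfine _ hslt)
    refine ⟨hslt, Filter.mem_of_superset hbig ?_⟩
    rintro σ ⟨hσ1, hσ2⟩
    have hσn := fun n => Set.mem_iInter.mp hσ1 n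
    have hσE : σ ∈ E := (hσn 0).1
    have hsC : Set.range f ⊆ Cf σ := Set.range_subset_iff.mpr fun n => (hσn n).2
    have hζlt : sSup (Set.range f) < sSup σ := hmemlt σ hσE _ hσ2
    exact ⟨hσE, (hCclub σ hσE).2.2 _ hsC (Set.range_nonempty f) hζlt⟩
  have hDsub : D ⊆ Set.Iio δ.ord := fun ζ h => h.1
  have hclub := clpts_isClubIn hDsub hDub
  obtain ⟨ξ, hξS, hξcl⟩ := hstat α₀ hα₀δ _ hclub
  have hξδ : ξ < δ.ord := (hsub α₀ hα₀δ hξS).1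
  have hcof : ξ.cof = Cardinal.aleph0 := (hsub α₀ hα₀δ hξS).2
  obtain ⟨s, hsD, hsc, hsne, hssup⟩ := clpts_cofinal_countable hξcl hcof
  have hξD : ξ ∈ D := by
    have h := hDcl s hsD hsc hsne (by rw [hssup]; exact hξδ)
    rwa [hssup] at h
  obtain ⟨σ, hσE, hσC⟩ := Ultrafilter.nonempty_of_mem hξD.2
  have hdis := hCdisj σ hσE
  have hξγ : ξ < sSup σ := Set.mem_Iio.mp ((hCclub σ hσE).1 hσC)
  have hmem : ξ ∈ S α₀ ∩ Set.Iio (sSup σ) ∩ Cf σ := ⟨⟨hξS, hξγ⟩, hσC⟩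
  rw [hdis] at hmem
  exact hmem
end

section
/- Let δ be a regular uncountable cardinal carrying a tail-uniform countably complete ultrafilter. Then there exists a countably complete tail-uniform ultrafilter W on δ such that: (1) every regressive function f on δ (f(α) < α for all 0 < α < δ) is bounded on a W-large set, i.e., there is β < δ with {α < δ : f(α) < β} ∈ W; and (2) the set {α < δ : α carries no tail-uniform countably complete ultrafilter} belongs to W. -/
/-- A (tail) uniform ultrafilter on the ordinal `α`: an ultrafilter on `Ordinal`
concentrating on `Set.Iio α` and extending the tail filter on `α`, i.e. containing
every interval `[γ, α)` for `γ < α`. -/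
def IsTailUniformOn (U : Ultrafilter Ordinal) (α : Ordinal) : Prop :=
  Set.Iio α ∈ U ∧ ∀ γ < α, Set.Ico γ α ∈ U

/-- An ultrafilter is countably complete if it is closed under countable
intersections. -/
def IsCountablyComplete (U : Ultrafilter Ordinal) : Prop :=
  ∀ s : ℕ → Set Ordinal, (∀ n, s n ∈ U) → (⋂ n, s n) ∈ U

namespace KetonenAux

open Set

lemma mem_ubind {U : Ultrafilter Ordinal} {G : Ordinal → Ultrafilter Ordinal}
    {s : Set Ordinal} : s ∈ U.bind G ↔ {a | s ∈ G a} ∈ U := Iff.rfl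

lemma cc_pure (a : Ordinal) : IsCountablyComplete (pure a) := by
  intro s hs
  simp only [Ultrafilter.mem_pure] at hs ⊢
  exact mem_iInter.2 hs

lemma cc_map (f : Ordinal → Ordinal) (U : Ultrafilter Ordinal)
    (hU : IsCountablyComplete U) : IsCountablyComplete (Ultrafilter.map f U) := by
  intro s hs
  simp only [Ultrafilter.mem_map] at hs ⊢
  rw [preimage_iInter]
  exact hU _ hs

lemma cc_bind {U : Ultrafilter Ordinal} {G : Ordinal → Ultrafilter Ordinal}
    (hU : IsCountablyComplete U) (hG : ∀ a, IsCountablyComplete (G a)) :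
    IsCountablyComplete (U.bind G) := by
  intro s hs
  simp only [mem_ubind] at hs ⊢
  have : (⋂ n, {a | s n ∈ G a}) ∈ U := hU _ hs
  refine Filter.mem_of_superset this ?_
  intro a ha
  rw [mem_iInter] at ha
  exact hG a s ha

lemma noDescOrd (g : ℕ → Ordinal) (h : ∀ n, g (n + 1) < g n) : False :=
  (RelEmbedding.natGT g h).not_wellFounded Ordinal.lt_wf

lemma umap_bind (f : Ordinal → Ordinal) (U : Ultrafilter Ordinal)
    (G : Ordinal → Ultrafilter Ordinal) :
    Ultrafilter.map f (U.bind G) = U.bind (fun a => Ultrafilter.map f (G a)) :=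
  Ultrafilter.coe_injective (Filter.ext fun s => Iff.rfl)

lemma umap_congr {B : Ultrafilter Ordinal} {g h : Ordinal → Ordinal}
    (he : {a | g a = h a} ∈ B) : Ultrafilter.map g B = Ultrafilter.map h B := by
  refine Ultrafilter.coe_injective ?_
  show Filter.map g ↑B = Filter.map h ↑B
  exact Filter.map_congr he

/-- The rank-`k` goodness predicate used in the proof that there is no
infinite descending chain in the Ketonen order. `ketQ W k n a` intuitively
says that starting from the ordinal `a` at level `n`, one can make `k` more
descending steps, each step from level `m` at ordinal `b` moving to a
`W m b`-large set of ordinals below `b`. -/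
def ketQ (W : ℕ → Ordinal → Ultrafilter Ordinal) : ℕ → ℕ → Ordinal → Prop
  | 0, _, _ => True
  | (k+1), n, a => ketQ W k n a ∧ {β | β < a ∧ ketQ W k (n+1) β} ∈ W n a

lemma ketQ_zero {W : ℕ → Ordinal → Ultrafilter Ordinal} {n : ℕ} {a : Ordinal} :
    ketQ W 0 n a := trivial

lemma ketQ_succ {W : ℕ → Ordinal → Ultrafilter Ordinal} {k n : ℕ} {a : Ordinal} :
    ketQ W (k+1) n a ↔
      ketQ W k n a ∧ {β | β < a ∧ ketQ W k (n+1) β} ∈ W n a := Iff.rfl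

lemma ketQ_large (U : ℕ → Ultrafilter Ordinal) (W : ℕ → Ordinal → Ultrafilter Ordinal)
    (hcon : ∀ n, {a | Set.Iio a ∈ W n a} ∈ U n)
    (hbind : ∀ n, U (n+1) = (U n).bind (W n)) :
    ∀ k n, {a | ketQ W k n a} ∈ U n := by
  intro k
  induction k with
  | zero =>
    intro n
    have he : {a : Ordinal | ketQ W 0 n a} = Set.univ := by ext a; simp [ketQ]
    rw [he]
    exact Filter.univ_mem
  | succ k ih =>
    intro n
    have h1 : {a | ketQ W k n a} ∈ U n := ih n
    have h2 : {a | ketQ W k (n+1) a} ∈ U (n+1) := ih (n+1)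
    rw [hbind n, mem_ubind] at h2
    have h3 : {a | Set.Iio a ∈ W n a} ∈ U n := hcon n
    refine Filter.mem_of_superset (Filter.inter_mem h1 (Filter.inter_mem h2 h3)) ?_
    rintro a ⟨hQ, hmem, hIio⟩
    refine ketQ_succ.2 ⟨hQ, ?_⟩
    have : (Set.Iio a ∩ {β | ketQ W k (n+1) β}) ∈ W n a := Filter.inter_mem hIio hmem
    refine Filter.mem_of_superset this ?_
    rintro β ⟨hβ, hQβ⟩
    exact ⟨hβ, hQβ⟩

/-- No infinite descending chain in the Ketonen order (on countably complete
ultrafilters over the ordinals). -/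
lemma ketonen_wf (U : ℕ → Ultrafilter Ordinal) (W : ℕ → Ordinal → Ultrafilter Ordinal)
    (hU0 : IsCountablyComplete (U 0))
    (hWcc : ∀ n a, IsCountablyComplete (W n a))
    (hcon : ∀ n, {a | Set.Iio a ∈ W n a} ∈ U n)
    (hbind : ∀ n, U (n+1) = (U n).bind (W n)) : False := by
  set A : Set Ordinal := {a | ∃ n, ∀ k, ketQ W k n a} with hA
  have hAne : A.Nonempty := by
    have hI : (⋂ k, {a | ketQ W k 0 a}) ∈ U 0 :=
      hU0 _ (fun k => ketQ_large U W hcon hbind k 0)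
    obtain ⟨a, ha⟩ := Ultrafilter.nonempty_of_mem hI
    rw [mem_iInter] at ha
    exact ⟨a, 0, ha⟩
  obtain ⟨a, haA, hmin⟩ := Ordinal.lt_wf.has_min A hAne
  obtain ⟨n, hQ⟩ := haA
  have hI : (⋂ k, {β | β < a ∧ ketQ W k (n+1) β}) ∈ W n a :=
    hWcc n a _ (fun k => (ketQ_succ.1 (hQ (k+1))).2)
  obtain ⟨b, hb⟩ := Ultrafilter.nonempty_of_mem hI
  rw [mem_iInter] at hb
  exact hmin b ⟨n+1, fun k => (hb k).2⟩ (hb 0).1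

lemma exists_min_fn (B : Ultrafilter Ordinal) (hB : IsCountablyComplete B)
    (F : Set (Ordinal → Ordinal)) (hF : F.Nonempty) :
    ∃ f ∈ F, ∀ g ∈ F, {a | g a < f a} ∉ B := by
  by_contra h
  push_neg at h
  have h' : ∀ p : {f // f ∈ F}, ∃ q : {f // f ∈ F}, {a | q.1 a < p.1 a} ∈ B := by
    rintro ⟨f, hf⟩
    obtain ⟨g, hg, hgf⟩ := h f hf
    exact ⟨⟨g, hg⟩, hgf⟩
  obtain ⟨f0, hf0⟩ := hF
  let seq : ℕ → {f // f ∈ F} := fun n => Nat.rec ⟨f0, hf0⟩ (fun _ p => (h' p).choose) n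
  have hseq : ∀ n, {a | (seq (n+1)).1 a < (seq n).1 a} ∈ B := fun n => (h' (seq n)).choose_spec
  have hI : (⋂ n, {a | (seq (n+1)).1 a < (seq n).1 a}) ∈ B := hB _ hseq
  obtain ⟨a, ha⟩ := Ultrafilter.nonempty_of_mem hI
  rw [mem_iInter] at ha
  exact noDescOrd (fun n => (seq n).1 a) ha

/-- The "nice" properties: countably complete, tail-uniform on `δ.ord`, and
every regressive function is bounded on a large set. -/
def Nice (δ : Cardinal) (W : Ultrafilter Ordinal) : Prop :=
  IsCountablyComplete W ∧ IsTailUniformOn W δ.ord ∧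
    ∀ f : Ordinal → Ordinal, (∀ α, 0 < α → α < δ.ord → f α < α) →
      ∃ β < δ.ord, {α : Ordinal | α < δ.ord ∧ f α < β} ∈ W

lemma one_lt_ord {δ : Cardinal} (hunc : Cardinal.aleph0 < δ) : (1 : Ordinal) < δ.ord := by
  have h : Cardinal.aleph0.ord ≤ δ.ord := Cardinal.ord_le_ord.2 hunc.le
  rw [Cardinal.ord_aleph0] at h
  exact lt_of_lt_of_le Ordinal.one_lt_omega0 h

/-- Pushing forward by a minimal function: any countably complete ultrafilter
that is tail-uniform on `δ.ord` has a pushforward which is `Nice`, by a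
function which is `≤ id` almost everywhere. -/
lemma minpush {δ : Cardinal} (hunc : Cardinal.aleph0 < δ)
    (B : Ultrafilter Ordinal) (hBcc : IsCountablyComplete B)
    (hBu : IsTailUniformOn B δ.ord) :
    ∃ f : Ordinal → Ordinal, Nice δ (Ultrafilter.map f B) ∧ {a | f a ≤ a} ∈ B := by
  classical
  set F : Set (Ordinal → Ordinal) := {f | IsTailUniformOn (Ultrafilter.map f B) δ.ord}
    with hFdef
  have hidF : id ∈ F := by
    show IsTailUniformOn (Ultrafilter.map id B) δ.ord
    rw [Ultrafilter.map_id]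
    exact hBu
  obtain ⟨f, hfF, hfmin⟩ := exists_min_fn B hBcc F ⟨id, hidF⟩
  have hfF' : IsTailUniformOn (Ultrafilter.map f B) δ.ord := hfF
  -- f ≤ id almost everywhere
  have hle : {a | f a ≤ a} ∈ B := by
    by_contra hn
    have h2 : {a | a < f a} ∈ B := by
      have := Ultrafilter.compl_mem_iff_notMem.2 hn
      refine Filter.mem_of_superset this ?_
      intro a ha
      simpa [not_le] using ha
    set g : Ordinal → Ordinal := fun a => if a < f a then a else f a with hgdef
    have hgid : Ultrafilter.map g B = B := by
      have : Ultrafilter.map g B = Ultrafilter.map id B := by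
        refine umap_congr ?_
        refine Filter.mem_of_superset h2 ?_
        intro a ha
        simp only [Set.mem_setOf_eq] at ha ⊢
        simp [hgdef, if_pos ha]
      rwa [Ultrafilter.map_id] at this
    have hgF : g ∈ F := by
      show IsTailUniformOn (Ultrafilter.map g B) δ.ord
      rw [hgid]; exact hBu
    refine hfmin g hgF ?_
    refine Filter.mem_of_superset h2 ?_
    intro a ha
    simp only [Set.mem_setOf_eq] at ha ⊢
    simpa [hgdef, if_pos ha] using ha
  refine ⟨f, ⟨cc_map f B hBcc, hfF', ?_⟩, hle⟩
  -- regressive functions are bounded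
  intro r hr
  by_contra hno
  push_neg at hno
  set W := Ultrafilter.map f B with hWdef
  have h1δ : (1 : Ordinal) < δ.ord := one_lt_ord hunc
  have hpos : Set.Ico 1 δ.ord ∈ W := hfF'.2 1 h1δ
  have hposB : f ⁻¹' (Set.Ico 1 δ.ord) ∈ B := Ultrafilter.mem_map.1 hpos
  -- the composed function r ∘ f
  set h : Ordinal → Ordinal := fun a => r (f a) with hhdef
  have hhF : h ∈ F := by
    constructor
    · rw [Ultrafilter.mem_map]
      refine Filter.mem_of_superset hposB ?_
      rintro a ⟨ha1, ha2⟩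
      have : (0 : Ordinal) < f a := lt_of_lt_of_le zero_lt_one ha1
      exact lt_trans (hr (f a) this ha2) ha2
    · intro γ hγ
      have hWc : {α : Ordinal | α < δ.ord ∧ r α < γ}ᶜ ∈ W :=
        Ultrafilter.compl_mem_iff_notMem.2 (hno γ hγ)
      have hB2 : f ⁻¹' ({α : Ordinal | α < δ.ord ∧ r α < γ}ᶜ) ∈ B :=
        Ultrafilter.mem_map.1 hWc
      rw [Ultrafilter.mem_map]
      refine Filter.mem_of_superset (Filter.inter_mem hposB hB2) ?_
      rintro a ⟨⟨ha1, ha2⟩, ha3⟩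
      have hfa0 : (0 : Ordinal) < f a := lt_of_lt_of_le zero_lt_one ha1
      have hrlt : r (f a) < f a := hr (f a) hfa0 ha2
      constructor
      · -- γ ≤ r (f a)
        by_contra hc
        push_neg at hc
        exact ha3 ⟨ha2, hc⟩
      · exact lt_trans hrlt ha2
  refine hfmin h hhF ?_
  refine Filter.mem_of_superset hposB ?_
  rintro a ⟨ha1, ha2⟩
  exact hr (f a) (lt_of_lt_of_le zero_lt_one ha1) ha2

end KetonenAux

open KetonenAux Set in
/-- If a regular uncountable cardinal `δ` carries a tail-uniform
countably complete ultrafilter, then it carries a countably complete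
tail-uniform ultrafilter `W` such that (1) every regressive function on `δ` is
bounded below `δ` on a `W`-large set, and (2) `W`-almost every `α < δ` carries
no tail-uniform countably complete ultrafilter. -/
theorem exists_ketonen_ultrafilter (δ : Cardinal) (hreg : δ.IsRegular)
    (hunc : Cardinal.aleph0 < δ)
    (hexists : ∃ U : Ultrafilter Ordinal, IsCountablyComplete U ∧
      IsTailUniformOn U δ.ord) :
    ∃ W : Ultrafilter Ordinal, IsCountablyComplete W ∧ IsTailUniformOn W δ.ord ∧
      (∀ f : Ordinal → Ordinal, (∀ α, 0 < α → α < δ.ord → f α < α) →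
        ∃ β < δ.ord, {α : Ordinal | α < δ.ord ∧ f α < β} ∈ W) ∧
      {α : Ordinal | α < δ.ord ∧
        ¬ ∃ U : Ultrafilter Ordinal, IsCountablyComplete U ∧ IsTailUniformOn U α} ∈ W := by
  classical
  by_contra hcontra
  -- the set of α < δ.ord carrying a countably complete tail-uniform ultrafilter
  set S : Set Ordinal :=
    {α | α < δ.ord ∧ ∃ V : Ultrafilter Ordinal, IsCountablyComplete V ∧ IsTailUniformOn V α}
    with hSdef
  -- a choice of such ultrafilters
  set V : Ordinal → Ultrafilter Ordinal := fun α =>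
    if h : ∃ V : Ultrafilter Ordinal, IsCountablyComplete V ∧ IsTailUniformOn V α
    then h.choose else pure 0 with hVdef
  have hVcc : ∀ α, IsCountablyComplete (V α) := by
    intro α
    by_cases h : ∃ V : Ultrafilter Ordinal, IsCountablyComplete V ∧ IsTailUniformOn V α
    · simp only [hVdef, dif_pos h]; exact h.choose_spec.1
    · simp only [hVdef, dif_neg h]; exact cc_pure 0
  have hVS : ∀ α ∈ S, IsTailUniformOn (V α) α := by
    rintro α ⟨-, h⟩
    simp only [hVdef, dif_pos h]
    exact h.choose_spec.2
  -- any Nice ultrafilter concentrates on S (else we'd be done)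
  have hSnice : ∀ W : Ultrafilter Ordinal, Nice δ W → S ∈ W := by
    intro W hW
    by_contra hS
    have hSc : Sᶜ ∈ W := Ultrafilter.compl_mem_iff_notMem.2 hS
    refine hcontra ⟨W, hW.1, hW.2.1, hW.2.2, ?_⟩
    refine Filter.mem_of_superset (Filter.inter_mem hW.2.1.1 hSc) ?_
    rintro α ⟨hα, hαS⟩
    exact ⟨hα, fun hV => hαS ⟨hα, hV⟩⟩
  have hδlim : Order.IsSuccLimit δ.ord := Cardinal.isSuccLimit_ord hunc.le
  -- the step in the descending chain
  have step : ∀ W : Ultrafilter Ordinal, Nice δ W →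
      ∃ p : Ultrafilter Ordinal × (Ordinal → Ultrafilter Ordinal),
        Nice δ p.1 ∧ (∀ α, IsCountablyComplete (p.2 α)) ∧
        {α | Set.Iio α ∈ p.2 α} ∈ W ∧ p.1 = W.bind p.2 := by
    intro W hW
    have hSW : S ∈ W := hSnice W hW
    set B : Ultrafilter Ordinal := W.bind V with hBdef
    have hBcc : IsCountablyComplete B := cc_bind hW.1 hVcc
    have hBu : IsTailUniformOn B δ.ord := by
      constructor
      · rw [hBdef, mem_ubind]
        refine Filter.mem_of_superset hSW ?_
        intro α hα
        refine Filter.mem_of_superset ((hVS α hα).1) ?_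
        intro x hx
        exact lt_trans hx hα.1
      · intro γ hγ
        rw [hBdef, mem_ubind]
        have hsucc : Order.succ γ < δ.ord := hδlim.succ_lt hγ
        have htail : Set.Ico (Order.succ γ) δ.ord ∈ W := hW.2.1.2 _ hsucc
        refine Filter.mem_of_superset (Filter.inter_mem hSW htail) ?_
        rintro α ⟨hαS, hα1, hα2⟩
        have hγα : γ < α := Order.succ_le_iff.1 hα1
        refine Filter.mem_of_superset ((hVS α hαS).2 γ hγα) ?_
        rintro x ⟨hx1, hx2⟩
        exact ⟨hx1, lt_trans hx2 hα2⟩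
    obtain ⟨f, hNice, hfle⟩ := minpush hunc B hBcc hBu
    refine ⟨(Ultrafilter.map f B, fun α => Ultrafilter.map f (V α)), hNice,
      fun α => cc_map f (V α) (hVcc α), ?_, ?_⟩
    · -- {α | Iio α ∈ map f (V α)} ∈ W
      have hT : {α | {a | f a ≤ a} ∈ V α} ∈ W := by
        rw [hBdef, mem_ubind] at hfle
        exact hfle
      refine Filter.mem_of_superset (Filter.inter_mem hT hSW) ?_
      rintro α ⟨hTα, hSα⟩
      show Set.Iio α ∈ Ultrafilter.map f (V α)
      rw [Ultrafilter.mem_map]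
      refine Filter.mem_of_superset (Filter.inter_mem hTα ((hVS α hSα).1)) ?_
      rintro x ⟨hx1, hx2⟩
      exact lt_of_le_of_lt hx1 (Set.mem_Iio.1 hx2)
    · rw [hBdef]
      exact umap_bind f W V
  -- build the descending chain
  obtain ⟨U0, hU0cc, hU0u⟩ := hexists
  obtain ⟨f0, hf0, -⟩ := minpush hunc U0 hU0cc hU0u
  set T := {q : Ultrafilter Ordinal × (Ordinal → Ultrafilter Ordinal) // Nice δ q.1} with hT
  have step' : ∀ t : T, ∃ t' : T, (∀ α, IsCountablyComplete (t'.1.2 α)) ∧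
      {α | Set.Iio α ∈ t'.1.2 α} ∈ t.1.1 ∧ t'.1.1 = t.1.1.bind t'.1.2 := by
    rintro ⟨⟨W, G⟩, hW⟩
    obtain ⟨p, hp1, hp2, hp3, hp4⟩ := step W hW
    exact ⟨⟨p, hp1⟩, hp2, hp3, hp4⟩
  let seq : ℕ → T := fun n =>
    Nat.rec ⟨(Ultrafilter.map f0 U0, fun _ => pure 0), hf0⟩ (fun _ t => (step' t).choose) n
  have hseq : ∀ n, (∀ α, IsCountablyComplete ((seq (n+1)).1.2 α)) ∧
      {α | Set.Iio α ∈ (seq (n+1)).1.2 α} ∈ (seq n).1.1 ∧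
      (seq (n+1)).1.1 = (seq n).1.1.bind ((seq (n+1)).1.2) :=
    fun n => (step' (seq n)).choose_spec
  exact ketonen_wf (fun n => (seq n).1.1) (fun n => (seq (n+1)).1.2)
    ((seq 0).2.1) (fun n => (hseq n).1) (fun n => (hseq n).2.1) (fun n => (hseq n).2.2)
end
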